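/- In the partitioned-clique-to-planning reduction, if the k-partite graph G (with parts V₁,…,V_k of equal size) has a k-clique {v₁,…,v_k} with v_i ∈ V_i, then the constructed SAS+ instance has a plan of length exactly k + 7·(k choose 2). -/

import Mathlib

/-- A SAS+ action: a partial precondition and a partial effect. -/
structure SASAction (V D : Type) where
  pre : V → Option D
  eff : V → Option D

/-- The result of applying an action to a total state. -/
def applyAct {V D : Type} (a : SASAction V D) (s : V → D) : V → D :=
  fun v => (a.eff v).getD (s v)

/-- An action is valid in a state if its precondition agrees with the state. -/
def validIn {V D : Type} (a : SASAction V D) (s : V → D) : Prop :=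
  ∀ v x, a.pre v = some x → s v = x

/-- `isPlanFrom π s t` : the sequence `π` is a plan from state `s` to state `t`. -/
def isPlanFrom {V D : Type} : List (SASAction V D) → (V → D) → (V → D) → Prop
  | [], s, t => t = s
  | a :: π, s, t => validIn a s ∧ isPlanFrom π (applyAct a s) t

/-- The state resulting from applying a sequence of actions. -/
def runPlan {V D : Type} (π : List (SASAction V D)) (s : V → D) : V → D :=
  π.foldl (fun s a => applyAct a s) s

/-- A total state satisfies a partial state wherever the latter is defined. -/
def satisfies {V D : Type} (goal : V → Option D) (s : V → D) : Prop :=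
  ∀ v x, goal v = some x → s v = x

/-- Variables of the partitioned-clique reduction: edge variables, vertex
    variables, checking variables, and clean-up variables. -/
inductive PCVar (ν : Type) (k : ℕ) : Type where
  | edge : Sym2 ν → PCVar ν k
  | vert : ν → Fin k → PCVar ν k
  | check : Fin k → Fin k → PCVar ν k
  | cleanup : ν → PCVar ν k
  deriving DecidableEq

/-- Group-1 action `aᵉ` for `e = {u,w}`: sets `x(e) := 1`. -/
def act1 {ν : Type} [DecidableEq ν] {k : ℕ} (u w : ν) : SASAction (PCVar ν k) Bool :=
  ⟨fun _ => none, fun z => if z = PCVar.edge s(u, w) then some true else none⟩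

/-- Group-2 action `aᵉᵤ` for `e = {u,w}`: precondition `x(e) = 1`, effect
    `x(u, part w) := 1`. -/
def act2 {ν : Type} [DecidableEq ν] {k : ℕ} (part : ν → Fin k) (u w : ν) :
    SASAction (PCVar ν k) Bool :=
  ⟨fun z => if z = PCVar.edge s(u, w) then some true else none,
   fun z => if z = PCVar.vert u (part w) then some true else none⟩

/-- Group-3 action `aᵛⱼ`: precondition `x(v,j) = 1`, effect `x(part v, j) := 1`. -/
def act3 {ν : Type} [DecidableEq ν] {k : ℕ} (part : ν → Fin k) (v : ν) (j : Fin k) :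
    SASAction (PCVar ν k) Bool :=
  ⟨fun z => if z = PCVar.vert v j then some true else none,
   fun z => if z = PCVar.check (part v) j then some true else none⟩

/-- Group-4 action `aᵥ`: sets the clean-up variable `x(v) := 1`. -/
def act4 {ν : Type} [DecidableEq ν] {k : ℕ} (v : ν) : SASAction (PCVar ν k) Bool :=
  ⟨fun _ => none, fun z => if z = PCVar.cleanup v then some true else none⟩

/-- Group-5 action `aʲᵥ`: precondition `x(v) = 1`, effect `x(v,j) := 0`. -/
def act5 {ν : Type} [DecidableEq ν] {k : ℕ} (v : ν) (j : Fin k) :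
    SASAction (PCVar ν k) Bool :=
  ⟨fun z => if z = PCVar.cleanup v then some true else none,
   fun z => if z = PCVar.vert v j then some false else none⟩

/-- The action set of the partitioned-clique reduction. -/
def PCActions {ν : Type} [DecidableEq ν] {k : ℕ} (adj : ν → ν → Prop)
    (part : ν → Fin k) : Set (SASAction (PCVar ν k) Bool) :=
  {a | (∃ u w, adj u w ∧ a = act1 u w) ∨
       (∃ u w, adj u w ∧ a = act2 part u w) ∨
       (∃ v j, j ≠ part v ∧ a = act3 part v j) ∨
       (∃ v, a = act4 v) ∨
       (∃ v j, j ≠ part v ∧ a = act5 v j)}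

/-- The goal of the partitioned-clique reduction: all checking variables are `1`,
    all vertex variables are `0`, the rest are undefined. -/
def PCGoal {ν : Type} {k : ℕ} (part : ν → Fin k) : PCVar ν k → Option Bool
  | PCVar.check i j => if i ≠ j then some true else none
  | PCVar.vert v j => if j ≠ part v then some false else none
  | _ => none

/-! ### Auxiliary lemmas -/

namespace PCAux

variable {V D : Type}

lemma runPlan_cons (a : SASAction V D) (π : List (SASAction V D)) (s : V → D) :
    runPlan (a :: π) s = runPlan π (applyAct a s) := rfl

lemma runPlan_append (π₁ π₂ : List (SASAction V D)) (s : V → D) :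
    runPlan (π₁ ++ π₂) s = runPlan π₂ (runPlan π₁ s) :=
  List.foldl_append

lemma isPlanFrom_append {π₁ π₂ : List (SASAction V D)} {s m t : V → D}
    (h1 : isPlanFrom π₁ s m) (h2 : isPlanFrom π₂ m t) :
    isPlanFrom (π₁ ++ π₂) s t := by
  induction π₁ generalizing s with
  | nil =>
      have h1' : m = s := h1
      subst h1'; exact h2
  | cons a π ih => exact ⟨h1.1, ih h1.2⟩

lemma runPlan_not_written {π : List (SASAction V D)} {v : V}
    (h : ∀ a ∈ π, a.eff v = none) (s : V → D) :
    runPlan π s v = s v := by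
  induction π generalizing s with
  | nil => rfl
  | cons a π ih =>
      rw [runPlan_cons, ih (fun b hb => h b (List.mem_cons_of_mem _ hb))]
      simp [applyAct, h a (List.mem_cons_self)]

lemma runPlan_written {π : List (SASAction V D)} {v : V} {b : D}
    (hu : ∀ a ∈ π, a.eff v = none ∨ a.eff v = some b)
    (hw : ∃ a ∈ π, a.eff v ≠ none) (s : V → D) :
    runPlan π s v = b := by
  induction π generalizing s with
  | nil => simp at hw
  | cons a π ih =>
      rw [runPlan_cons]
      by_cases h : ∃ a' ∈ π, a'.eff v ≠ none
      · exact ih (fun b' hb => hu b' (List.mem_cons_of_mem _ hb)) h _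
      · push_neg at h
        rw [runPlan_not_written h]
        have ha : a.eff v = some b := by
          rcases hw with ⟨a', ha', hne⟩
          rcases List.mem_cons.mp ha' with rfl | hmem
          · rcases hu a' (List.mem_cons_self) with h' | h'
            · exact absurd h' hne
            · exact h'
          · exact absurd (h a' hmem) hne
        simp [applyAct, ha]

lemma isPlanFrom_run {π : List (SASAction V D)} {s : V → D}
    (hval : ∀ a ∈ π, validIn a s)
    (hstab : ∀ a ∈ π, ∀ b ∈ π, ∀ v, a.pre v ≠ none → b.eff v = none) :
    isPlanFrom π s (runPlan π s) := by
  induction π generalizing s with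
  | nil => rfl
  | cons a π ih =>
      refine ⟨hval a (List.mem_cons_self), ?_⟩
      apply ih
      · intro b hb v x hpre
        have he : a.eff v = none :=
          hstab b (List.mem_cons_of_mem _ hb) a (List.mem_cons_self) v (by simp [hpre])
        simp only [applyAct, he, Option.getD_none]
        exact hval b (List.mem_cons_of_mem _ hb) v x hpre
      · intro a' ha' b' hb'
        exact hstab a' (List.mem_cons_of_mem _ ha') b' (List.mem_cons_of_mem _ hb')

def natPairs : ℕ → List (ℕ × ℕ)
  | 0 => []
  | (k+1) => natPairs k ++ (List.range k).map (fun i => (i, k))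

lemma natPairs_length (k : ℕ) : (natPairs k).length = k.choose 2 := by
  induction k with
  | zero => rfl
  | succ k ih =>
      simp [natPairs, ih, Nat.choose_succ_succ, Nat.choose_one_right]
      omega

lemma mem_natPairs {k : ℕ} {p : ℕ × ℕ} : p ∈ natPairs k ↔ p.2 < k ∧ p.1 < p.2 := by
  obtain ⟨a, b⟩ := p
  induction k with
  | zero => simp [natPairs]
  | succ k ih =>
      simp only [natPairs, List.mem_append, List.mem_map, List.mem_range, ih, Prod.mk.injEq]
      constructor
      · rintro (⟨h1, h2⟩ | ⟨i, hi, rfl, rfl⟩) <;> omega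
      · rintro ⟨h1, h2⟩
        by_cases hb : b < k
        · exact Or.inl ⟨hb, h2⟩
        · exact Or.inr ⟨a, by omega, rfl, by omega⟩

/-- List of pairs `(i,j)` of `Fin k` with `i < j`. -/
def finPairsLT (k : ℕ) : List (Fin k × Fin k) :=
  (natPairs k).attach.map
    (fun q => (⟨q.1.1, Nat.lt_trans (mem_natPairs.mp q.2).2 (mem_natPairs.mp q.2).1⟩,
               ⟨q.1.2, (mem_natPairs.mp q.2).1⟩))

lemma finPairsLT_length (k : ℕ) : (finPairsLT k).length = k.choose 2 := by
  simp [finPairsLT, natPairs_length]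

lemma mem_finPairsLT {k : ℕ} (p : Fin k × Fin k) : p ∈ finPairsLT k ↔ p.1 < p.2 := by
  obtain ⟨i, j⟩ := p
  constructor
  · intro hp
    simp only [finPairsLT, List.mem_map, List.mem_attach, true_and] at hp
    obtain ⟨⟨⟨a, b⟩, hq⟩, heq⟩ := hp
    have hab := (mem_natPairs.mp hq).2
    rw [Prod.ext_iff] at heq
    obtain ⟨h1, h2⟩ := heq
    rw [← h1, ← h2]
    exact hab
  · intro hij
    exact List.mem_map.mpr
      ⟨⟨(i.1, j.1), mem_natPairs.mpr ⟨j.isLt, hij⟩⟩, List.mem_attach _ _, rfl⟩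

/-- List of pairs `(i,j)` of `Fin k` with `i ≠ j`. -/
def finPairsNE (k : ℕ) : List (Fin k × Fin k) :=
  finPairsLT k ++ (finPairsLT k).map Prod.swap

lemma finPairsNE_length (k : ℕ) : (finPairsNE k).length = 2 * k.choose 2 := by
  simp [finPairsNE, finPairsLT_length]
  omega

lemma mem_finPairsNE {k : ℕ} (p : Fin k × Fin k) : p ∈ finPairsNE k ↔ p.1 ≠ p.2 := by
  obtain ⟨i, j⟩ := p
  rw [finPairsNE, List.mem_append]
  constructor
  · rintro (h | h)
    · exact ne_of_lt ((mem_finPairsLT _).mp h)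
    · obtain ⟨a, ha, heq⟩ := List.mem_map.mp h
      have h12 : a.2 = i ∧ a.1 = j := by
        obtain ⟨a1, a2⟩ := a
        simpa [Prod.ext_iff, Prod.swap, eq_comm] using heq
      obtain ⟨h1, h2⟩ := h12
      rw [← h1, ← h2]
      exact ne_of_gt ((mem_finPairsLT _).mp ha)
  · intro hij
    rcases lt_or_gt_of_ne hij with h | h
    · exact Or.inl ((mem_finPairsLT (i, j)).mpr h)
    · exact Or.inr (List.mem_map.mpr ⟨(j, i), (mem_finPairsLT (j, i)).mpr h, rfl⟩)

variable {ν : Type} [DecidableEq ν] {k : ℕ}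

def pcA1 (c : Fin k → ν) : List (SASAction (PCVar ν k) Bool) :=
  (finPairsLT k).map (fun p => act1 (c p.1) (c p.2))

def pcA2 (part : ν → Fin k) (c : Fin k → ν) : List (SASAction (PCVar ν k) Bool) :=
  (finPairsNE k).map (fun p => act2 part (c p.1) (c p.2))

def pcA3 (part : ν → Fin k) (c : Fin k → ν) : List (SASAction (PCVar ν k) Bool) :=
  (finPairsNE k).map (fun p => act3 part (c p.1) p.2)

def pcA4 (c : Fin k → ν) : List (SASAction (PCVar ν k) Bool) :=
  (List.finRange k).map (fun i => act4 (c i))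

def pcA5 (c : Fin k → ν) : List (SASAction (PCVar ν k) Bool) :=
  (finPairsNE k).map (fun p => act5 (c p.1) p.2)

def pcS0 : PCVar ν k → Bool := fun _ => false

def pcS1 (c : Fin k → ν) : PCVar ν k → Bool := runPlan (pcA1 c) pcS0
def pcS2 (part : ν → Fin k) (c : Fin k → ν) : PCVar ν k → Bool :=
  runPlan (pcA2 part c) (pcS1 c)
def pcS3 (part : ν → Fin k) (c : Fin k → ν) : PCVar ν k → Bool :=
  runPlan (pcA3 part c) (pcS2 part c)
def pcS4 (part : ν → Fin k) (c : Fin k → ν) : PCVar ν k → Bool :=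
  runPlan (pcA4 c) (pcS3 part c)
def pcS5 (part : ν → Fin k) (c : Fin k → ν) : PCVar ν k → Bool :=
  runPlan (pcA5 c) (pcS4 part c)

end PCAux

theorem clique_gives_plan {ν : Type} [DecidableEq ν] {k : ℕ}
    (adj : ν → ν → Prop) (part : ν → Fin k)
    (hsym : ∀ u w, adj u w → adj w u)
    (hpart : ∀ u w, adj u w → part u ≠ part w)
    (c : Fin k → ν) (hc : ∀ i, part (c i) = i)
    (hclique : ∀ i j, i ≠ j → adj (c i) (c j)) :
    ∃ π : List (SASAction (PCVar ν k) Bool),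
      (∀ a ∈ π, a ∈ PCActions adj part) ∧
      π.length = k + 7 * Nat.choose k 2 ∧
      ∃ t, isPlanFrom π (fun _ => false) t ∧ satisfies (PCGoal part) t := by
  classical
  open PCAux in
  refine ⟨pcA1 c ++ (pcA2 part c ++ (pcA3 part c ++ (pcA4 c ++ pcA5 c))), ?_, ?_, ?_⟩
  -- membership
  · intro a ha
    simp only [List.mem_append, pcA1, pcA2, pcA3, pcA4, pcA5, List.mem_map] at ha
    rcases ha with ⟨p, hp, rfl⟩ | ⟨p, hp, rfl⟩ | ⟨p, hp, rfl⟩ | ⟨i, hi, rfl⟩ | ⟨p, hp, rfl⟩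
    · exact Or.inl ⟨c p.1, c p.2, hclique p.1 p.2 (ne_of_lt ((mem_finPairsLT p).mp hp)), rfl⟩
    · exact Or.inr (Or.inl ⟨c p.1, c p.2, hclique p.1 p.2 ((mem_finPairsNE p).mp hp), rfl⟩)
    · refine Or.inr (Or.inr (Or.inl ⟨c p.1, p.2, ?_, rfl⟩))
      rw [hc]
      exact ((mem_finPairsNE p).mp hp).symm
    · exact Or.inr (Or.inr (Or.inr (Or.inl ⟨c i, rfl⟩)))
    · refine Or.inr (Or.inr (Or.inr (Or.inr ⟨c p.1, p.2, ?_, rfl⟩)))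
      rw [hc]
      exact ((mem_finPairsNE p).mp hp).symm
  -- length
  · simp only [List.length_append, pcA1, pcA2, pcA3, pcA4, pcA5, List.length_map,
      finPairsLT_length, finPairsNE_length, List.length_finRange]
    ring
  -- the plan works
  · -- key state facts
    have f1 : ∀ i j : Fin k, i ≠ j → pcS1 c (PCVar.edge s(c i, c j)) = true := by
      intro i j hij
      apply runPlan_written
      · intro a ha
        obtain ⟨p, hp, rfl⟩ := List.mem_map.mp ha
        simp only [act1]
        split <;> simp
      · rcases lt_or_gt_of_ne hij with h | h
        · refine ⟨act1 (c i) (c j), List.mem_map.mpr ⟨(i, j), (mem_finPairsLT _).mpr h, rfl⟩, ?_⟩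
          simp [act1]
        · refine ⟨act1 (c j) (c i), List.mem_map.mpr ⟨(j, i), (mem_finPairsLT _).mpr h, rfl⟩, ?_⟩
          have hsw : s(c i, c j) = s(c j, c i) := Sym2.eq_swap
          simp [act1, hsw]
    have f2 : ∀ i j : Fin k, i ≠ j → pcS2 part c (PCVar.vert (c i) j) = true := by
      intro i j hij
      apply runPlan_written
      · intro a ha
        obtain ⟨p, hp, rfl⟩ := List.mem_map.mp ha
        simp only [act2]
        split <;> simp
      · refine ⟨act2 part (c i) (c j),
          List.mem_map.mpr ⟨(i, j), (mem_finPairsNE _).mpr hij, rfl⟩, ?_⟩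
        simp [act2, hc]
    have f4 : ∀ i : Fin k, pcS4 part c (PCVar.cleanup (c i)) = true := by
      intro i
      apply runPlan_written
      · intro a ha
        obtain ⟨q, hq, rfl⟩ := List.mem_map.mp ha
        simp only [act4]
        split <;> simp
      · exact ⟨act4 (c i), List.mem_map.mpr ⟨i, List.mem_finRange i, rfl⟩, by simp [act4]⟩
    -- validity of each phase
    have p1 : isPlanFrom (pcA1 c) pcS0 (pcS1 c) := by
      apply isPlanFrom_run
      · intro a ha
        obtain ⟨p, hp, rfl⟩ := List.mem_map.mp ha
        intro v x hx
        simp [act1] at hx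
      · intro a ha b hb v hv
        obtain ⟨p, hp, rfl⟩ := List.mem_map.mp ha
        simp [act1] at hv
    have p2 : isPlanFrom (pcA2 part c) (pcS1 c) (pcS2 part c) := by
      apply isPlanFrom_run
      · intro a ha
        obtain ⟨p, hp, rfl⟩ := List.mem_map.mp ha
        intro v x hx
        simp only [act2] at hx
        split at hx
        case isTrue h =>
          obtain rfl : x = true := (Option.some.inj hx).symm
          rw [h]
          exact f1 p.1 p.2 ((mem_finPairsNE p).mp hp)
        case isFalse h => exact absurd hx (by simp)
      · intro a ha b hb v hv
        obtain ⟨p, hp, rfl⟩ := List.mem_map.mp ha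
        obtain ⟨q, hq, rfl⟩ := List.mem_map.mp hb
        simp only [act2] at hv ⊢
        split at hv
        case isTrue h => subst h; simp
        case isFalse h => exact absurd rfl hv
    have p3 : isPlanFrom (pcA3 part c) (pcS2 part c) (pcS3 part c) := by
      apply isPlanFrom_run
      · intro a ha
        obtain ⟨p, hp, rfl⟩ := List.mem_map.mp ha
        intro v x hx
        simp only [act3] at hx
        split at hx
        case isTrue h =>
          obtain rfl : x = true := (Option.some.inj hx).symm
          rw [h]
          exact f2 p.1 p.2 ((mem_finPairsNE p).mp hp)
        case isFalse h => exact absurd hx (by simp)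
      · intro a ha b hb v hv
        obtain ⟨p, hp, rfl⟩ := List.mem_map.mp ha
        obtain ⟨q, hq, rfl⟩ := List.mem_map.mp hb
        simp only [act3] at hv ⊢
        split at hv
        case isTrue h => subst h; simp
        case isFalse h => exact absurd rfl hv
    have p4 : isPlanFrom (pcA4 c) (pcS3 part c) (pcS4 part c) := by
      apply isPlanFrom_run
      · intro a ha
        obtain ⟨i, hi, rfl⟩ := List.mem_map.mp ha
        intro v x hx
        simp [act4] at hx
      · intro a ha b hb v hv
        obtain ⟨i, hi, rfl⟩ := List.mem_map.mp ha
        simp [act4] at hv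
    have p5 : isPlanFrom (pcA5 c) (pcS4 part c) (pcS5 part c) := by
      apply isPlanFrom_run
      · intro a ha
        obtain ⟨p, hp, rfl⟩ := List.mem_map.mp ha
        intro v x hx
        simp only [act5] at hx
        split at hx
        case isTrue h =>
          obtain rfl : x = true := (Option.some.inj hx).symm
          rw [h]
          exact f4 p.1
        case isFalse h => exact absurd hx (by simp)
      · intro a ha b hb v hv
        obtain ⟨p, hp, rfl⟩ := List.mem_map.mp ha
        obtain ⟨q, hq, rfl⟩ := List.mem_map.mp hb
        simp only [act5] at hv ⊢
        split at hv
        case isTrue h => subst h; simp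
        case isFalse h => exact absurd rfl hv
    refine ⟨pcS5 part c, ?_, ?_⟩
    · exact isPlanFrom_append p1 (isPlanFrom_append p2 (isPlanFrom_append p3
        (isPlanFrom_append p4 p5)))
    · -- goal satisfaction
      intro v x hx
      cases v with
      | edge e => simp [PCGoal] at hx
      | cleanup u => simp [PCGoal] at hx
      | check i j =>
          simp only [PCGoal] at hx
          split at hx
          case isTrue hij =>
            obtain rfl : x = true := (Option.some.inj hx).symm
            have h5 : pcS5 part c (PCVar.check i j) = pcS4 part c (PCVar.check i j) := by
              apply runPlan_not_written
              intro a ha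
              obtain ⟨p, hp, rfl⟩ := List.mem_map.mp ha
              simp [act5]
            have h4 : pcS4 part c (PCVar.check i j) = pcS3 part c (PCVar.check i j) := by
              apply runPlan_not_written
              intro a ha
              obtain ⟨q, hq, rfl⟩ := List.mem_map.mp ha
              simp [act4]
            rw [h5, h4]
            apply runPlan_written
            · intro a ha
              obtain ⟨p, hp, rfl⟩ := List.mem_map.mp ha
              simp only [act3]
              split <;> simp
            · refine ⟨act3 part (c i) j,
                List.mem_map.mpr ⟨(i, j), (mem_finPairsNE _).mpr hij, rfl⟩, ?_⟩
              simp [act3, hc]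
          case isFalse h => exact absurd hx (by simp)
      | vert u j =>
          simp only [PCGoal] at hx
          split at hx
          case isTrue hj =>
            obtain rfl : x = false := (Option.some.inj hx).symm
            by_cases hw : ∃ p ∈ finPairsNE k, c p.1 = u ∧ p.2 = j
            · apply runPlan_written
              · intro a ha
                obtain ⟨p, hp, rfl⟩ := List.mem_map.mp ha
                simp only [act5]
                split <;> simp
              · obtain ⟨p, hp, h1, h2⟩ := hw
                refine ⟨act5 (c p.1) p.2, List.mem_map.mpr ⟨p, hp, rfl⟩, ?_⟩
                simp [act5, h1, h2]
            · have h5 : pcS5 part c (PCVar.vert u j) = pcS4 part c (PCVar.vert u j) := by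
                apply runPlan_not_written
                intro a ha
                obtain ⟨p, hp, rfl⟩ := List.mem_map.mp ha
                simp only [act5]
                split
                case isTrue h =>
                  rw [PCVar.vert.injEq] at h
                  exact absurd ⟨p, hp, h.1.symm, h.2.symm⟩ hw
                case isFalse h => rfl
              have h4 : pcS4 part c (PCVar.vert u j) = pcS3 part c (PCVar.vert u j) := by
                apply runPlan_not_written
                intro a ha
                obtain ⟨i, hi, rfl⟩ := List.mem_map.mp ha
                simp [act4]
              have h3 : pcS3 part c (PCVar.vert u j) = pcS2 part c (PCVar.vert u j) := by
                apply runPlan_not_written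
                intro a ha
                obtain ⟨p, hp, rfl⟩ := List.mem_map.mp ha
                simp [act3]
              have h2 : pcS2 part c (PCVar.vert u j) = pcS1 c (PCVar.vert u j) := by
                apply runPlan_not_written
                intro a ha
                obtain ⟨p, hp, rfl⟩ := List.mem_map.mp ha
                simp only [act2]
                split
                case isTrue h =>
                  rw [PCVar.vert.injEq] at h
                  refine absurd ⟨p, hp, h.1.symm, ?_⟩ hw
                  rw [h.2, hc]
                case isFalse h => rfl
              have h1 : pcS1 c (PCVar.vert u j) = pcS0 (PCVar.vert u j) := by
                apply runPlan_not_written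
                intro a ha
                obtain ⟨p, hp, rfl⟩ := List.mem_map.mp ha
                simp [act1]
              rw [h5, h4, h3, h2, h1]
              rfl
          case isFalse h => exact absurd hx (by simp)
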